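/- Let (E,H,(·|·)) and (E,H',(·|·)') be two extended affine Lie algebra structures on the same Lie algebra E over a field k of characteristic 0; their cores coincide, E_c = E'_c. Then there exists a nonzero scalar a ∈ k such that (x|y)' = a·(x|y) for all x, y ∈ E_c, i.e. the restrictions of the two invariant forms to the common core are proportional. -/

import Mathlib

/-! Statement 7: the invariant forms of two EALA structures are proportional on the core. -/

section EALA

variable {k E : Type*} [Field k] [CharZero k] [LieRing E] [LieAlgebra k E]

/-- The weight space of the toral subalgebra `H` for the weight `α ∈ H*`:
`E_α = {e ∈ E : [h,e] = α(h)e for all h ∈ H}`. -/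
def wtSpace (H : LieSubalgebra k E) (α : Module.Dual k H) : Submodule k E where
  carrier := {e | ∀ h : H, ⁅(h : E), e⁆ = α h • e}
  add_mem' := by
    intro a b ha hb h
    simp only [lie_add, ha h, hb h, smul_add]
  zero_mem' := by
    intro h
    simp
  smul_mem' := by
    intro c a ha h
    rw [lie_smul, ha h, smul_comm]

/-- The set of roots `Ψ` of `(E,H)`: those `α ∈ H*` with `E_α ≠ 0` (note `0 ∈ Ψ`). -/
def rootSet (H : LieSubalgebra k E) : Set (Module.Dual k H) :=
  {α | wtSpace H α ≠ ⊥}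

variable (B : E →ₗ[k] E →ₗ[k] k)

/-- The representatives `t_α ∈ H` of `α ∈ H*` under the form: `(t_α | h) = α(h)` for `h ∈ H`. -/
def reps (H : LieSubalgebra k E) (α : Module.Dual k H) : Set H :=
  {t | ∀ h : H, B (t : E) (h : E) = α h}

/-- The anisotropic roots: `Ψ^an = {α ∈ Ψ : (α|α) ≠ 0}`. -/
def anisoRootSet (H : LieSubalgebra k E) : Set (Module.Dual k H) :=
  {α | α ∈ rootSet H ∧ ∃ t ∈ reps B H α, B (t : E) (t : E) ≠ 0}

/-- The isotropic (null) roots: `Ψ⁰ = {α ∈ Ψ : (α|α) = 0}`. -/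
def isoRootSet (H : LieSubalgebra k E) : Set (Module.Dual k H) :=
  {α | α ∈ rootSet H ∧ ∃ t ∈ reps B H α, B (t : E) (t : E) = 0}

/-- The core `E_c` of `(E, H, (·|·))`: the subalgebra of `E` generated by
`⋃_{α ∈ Ψ^an} E_α`. -/
def core (H : LieSubalgebra k E) : LieSubalgebra k E :=
  LieSubalgebra.lieSpan k E (⋃ α ∈ anisoRootSet B H, (wtSpace H α : Set E))

/-- An extended affine Lie algebra structure `(E, H, (·|·))` (paper §2.3):
axioms (EA1)–(EA5), together with the requirements that the bilinear form is
nondegenerate, symmetric and invariant. -/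
structure IsEALA (H : LieSubalgebra k E) : Prop where
  /-- the form is symmetric -/
  symm : ∀ x y : E, B x y = B y x
  /-- the form is invariant -/
  invariant : ∀ x y z : E, B ⁅x, y⁆ z = B x ⁅y, z⁆
  /-- the form is nondegenerate -/
  nondeg : ∀ x : E, (∀ y : E, B x y = 0) → x = 0
  /-- (EA1): `H` is nontrivial … -/
  H_ne_bot : H ≠ ⊥
  /-- … finite-dimensional … -/
  H_fd : FiniteDimensional k H
  /-- … self-centralizing (in particular abelian): `E_0 = H` … -/
  self_centralizing : wtSpace H 0 = H.toSubmodule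
  /-- … and toral: `E = ⊕_{α ∈ H*} E_α` -/
  toral : (⨆ α : Module.Dual k H, wtSpace H α) = ⊤
  /-- the restriction of the form to `H × H` is nondegenerate -/
  H_nondeg : ∀ t : H, (∀ h : H, B (t : E) (h : E) = 0) → t = 0
  /-- (EA2): `ad x` is locally nilpotent for `x ∈ E_α`, `α ∈ Ψ^an` -/
  ea2 : ∀ α ∈ anisoRootSet B H, ∀ x ∈ wtSpace H α, ∀ e : E,
    ∃ N : ℕ, (fun y => ⁅x, y⁆)^[N] e = 0
  /-- (EA3): `Ψ^an` is connected -/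
  ea3 : ∀ Ψ₁ Ψ₂ : Set (Module.Dual k H), anisoRootSet B H = Ψ₁ ∪ Ψ₂ →
    Ψ₁.Nonempty → Ψ₂.Nonempty →
    ∃ α ∈ Ψ₁, ∃ β ∈ Ψ₂, ∃ t ∈ reps B H α, ∃ s ∈ reps B H β, B (t : E) (s : E) ≠ 0
  /-- (EA4): the centralizer of the core is contained in the core -/
  ea4 : ∀ e : E, (∀ x ∈ core B H, ⁅e, x⁆ = 0) → e ∈ core B H
  /-- (EA5): the subgroup of `(H*,+)` generated by `Ψ⁰` is free abelian of finite rank -/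
  ea5 : ∃ n : ℕ, Nonempty ((AddSubgroup.closure (isoRootSet B H)) ≃+ (Fin n → ℤ))

end EALA

section ProofAux

variable {k E : Type*} [Field k] [CharZero k] [LieRing E] [LieAlgebra k E]

lemma mem_wtSpace' {H : LieSubalgebra k E} {α : Module.Dual k H} {x : E} :
    x ∈ wtSpace H α ↔ ∀ h : H, ⁅(h : E), x⁆ = α h • x := Iff.rfl

lemma mem_reps' {B : E →ₗ[k] E →ₗ[k] k} {H : LieSubalgebra k E} {α : Module.Dual k H} {t : H} :
    t ∈ reps B H α ↔ ∀ h : H, B (t : E) (h : E) = α h := Iff.rfl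

/-- Any invariant form vanishes on `E_γ × E_δ` unless `γ + δ = 0`. -/
lemma wt_ortho {H : LieSubalgebra k E} {C : E →ₗ[k] E →ₗ[k] k}
    (Cinv : ∀ x y z : E, C ⁅x, y⁆ z = C x ⁅y, z⁆)
    {γ δ : Module.Dual k H} (hγδ : γ + δ ≠ 0)
    {x y : E} (hx : x ∈ wtSpace H γ) (hy : y ∈ wtSpace H δ) : C x y = 0 := by
  obtain ⟨h0, hh0⟩ : ∃ h : H, γ h + δ h ≠ 0 := by
    by_contra hcon
    push_neg at hcon
    exact hγδ (LinearMap.ext fun h => by simpa using hcon h)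
  have e1 : C ⁅(h0 : E), x⁆ y = γ h0 * (C x y) := by
    rw [hx h0, map_smul, LinearMap.smul_apply, smul_eq_mul]
  have e2 : C ⁅(h0 : E), x⁆ y = -(δ h0 * (C x y)) := by
    rw [← lie_skew, map_neg, LinearMap.neg_apply, Cinv, hy h0, map_smul, smul_eq_mul]
  have : (γ h0 + δ h0) * C x y = 0 := by
    rw [e1] at e2
    linear_combination e2
  rcases mul_eq_zero.mp this with h | h
  · exact absurd h hh0
  · exact h

/-- If `x ∈ E_γ` is nonzero and `C` is an invariant nondegenerate form,
then `C` pairs `x` nontrivially with some element of `E_{-γ}`. -/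
lemma exists_pairing {H : LieSubalgebra k E}
    (htoral : (⨆ α : Module.Dual k H, wtSpace H α) = ⊤)
    {C : E →ₗ[k] E →ₗ[k] k}
    (Cinv : ∀ x y z : E, C ⁅x, y⁆ z = C x ⁅y, z⁆)
    (Cnondeg : ∀ x : E, (∀ y : E, C x y = 0) → x = 0)
    {γ : Module.Dual k H} {x : E} (hx : x ∈ wtSpace H γ) (hx0 : x ≠ 0) :
    ∃ y ∈ wtSpace H (-γ), C x y ≠ 0 := by
  by_contra hcon
  push_neg at hcon
  apply hx0
  apply Cnondeg
  intro w
  have hw : w ∈ (⨆ α : Module.Dual k H, wtSpace H α) := by rw [htoral]; exact trivial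
  refine Submodule.iSup_induction (motive := fun w => C x w = 0) _ hw ?_ ?_ ?_
  · intro δ y hy
    by_cases hδ : γ + δ = 0
    · have hδ' : δ = -γ := eq_neg_of_add_eq_zero_right hδ
      exact hcon y (hδ' ▸ hy)
    · exact wt_ortho Cinv hδ hx hy
  · simp
  · intro y z hy hz
    rw [map_add, hy, hz, add_zero]

/-- `[E_γ, E_{-γ}] ⊆ E_0`. -/
lemma bracket_mem_wt_zero {H : LieSubalgebra k E} {γ : Module.Dual k H} {x y : E}
    (hx : x ∈ wtSpace H γ) (hy : y ∈ wtSpace H (-γ)) : ⁅x, y⁆ ∈ wtSpace H 0 := by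
  intro h
  rw [leibniz_lie, hx h, hy h, smul_lie, lie_smul]
  simp

/-- For an invariant form `C`, `C([x,y], h) = γ(h)·C(x,y)` for `x ∈ E_γ`, `y ∈ E_{-γ}`, `h ∈ H`. -/
lemma bracket_pair {H : LieSubalgebra k E} {C : E →ₗ[k] E →ₗ[k] k}
    (Cinv : ∀ x y z : E, C ⁅x, y⁆ z = C x ⁅y, z⁆)
    {γ : Module.Dual k H} {x y : E}
    (hx : x ∈ wtSpace H γ) (hy : y ∈ wtSpace H (-γ)) (h : H) :
    C ⁅x, y⁆ (h : E) = γ h * C x y := by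
  have hyh : ⁅y, (h : E)⁆ = γ h • y := by
    rw [← lie_skew, hy h]
    simp
  rw [Cinv, hyh, map_smul, smul_eq_mul]

lemma reps_unique {B : E →ₗ[k] E →ₗ[k] k} {H : LieSubalgebra k E}
    (hnd : ∀ t : H, (∀ h : H, B (t : E) (h : E) = 0) → t = 0)
    {α : Module.Dual k H} {t s : H} (ht : t ∈ reps B H α) (hs : s ∈ reps B H α) : t = s := by
  have h0 : t - s = 0 := by
    apply hnd
    intro h
    have hc : ((t - s : H) : E) = (t : E) - (s : E) := rfl
    rw [hc, map_sub, LinearMap.sub_apply, ht h, hs h, sub_self]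
  exact sub_eq_zero.mp h0

lemma aniso_nonempty {B : E →ₗ[k] E →ₗ[k] k} {H : LieSubalgebra k E} (h : IsEALA B H) :
    (anisoRootSet B H).Nonempty := by
  by_contra hcon
  rw [Set.not_nonempty_iff_eq_empty] at hcon
  have hcore : core B H ≤ ⊥ := by
    rw [core, LieSubalgebra.lieSpan_le]
    simp [hcon]
  have hall : ∀ e : E, e = 0 := by
    intro e
    have he : e ∈ core B H := h.ea4 e (fun x hx => by
      have hx0 : x = 0 := by simpa using hcore hx
      simp [hx0])
    simpa using hcore he
  apply h.H_ne_bot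
  ext x
  simp [hall x]

/-- The key per-root lemma: for each anisotropic root `γ` there is a nonzero constant `c`
and a representative `t ∈ reps B H γ` such that `B'(t,·) = c·γ` on `H` and
`B' = c·B` on `E_γ × E_{-γ}`. -/
lemma key_lemma {B : E →ₗ[k] E →ₗ[k] k} {H : LieSubalgebra k E} (hB : IsEALA B H)
    {B' : E →ₗ[k] E →ₗ[k] k}
    (hinv' : ∀ x y z : E, B' ⁅x, y⁆ z = B' x ⁅y, z⁆)
    (hnondeg' : ∀ x : E, (∀ y : E, B' x y = 0) → x = 0)
    {γ : Module.Dual k H} (hγ : γ ∈ anisoRootSet B H) :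
    ∃ c : k, ∃ t : H, c ≠ 0 ∧ t ∈ reps B H γ ∧
      (∀ h : H, B' (t : E) (h : E) = c * γ h) ∧
      (∀ x ∈ wtSpace H γ, ∀ y ∈ wtSpace H (-γ), B' x y = c * B x y) := by
  obtain ⟨hroot, t₀, ht₀, ht₀0⟩ := hγ
  obtain ⟨e₀, he₀, he₀0⟩ := Submodule.exists_mem_ne_zero_of_ne_bot hroot
  obtain ⟨f₀, hf₀, hκ⟩ := exists_pairing hB.toral hB.invariant hB.nondeg he₀ he₀0
  set κ : k := B e₀ f₀ with hκdef
  -- the canonical representative t of γ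
  have hbH : ⁅e₀, f₀⁆ ∈ H := by
    have h0 := bracket_mem_wt_zero he₀ hf₀
    rw [hB.self_centralizing] at h0
    exact h0
  set t : H := κ⁻¹ • ⟨⁅e₀, f₀⁆, hbH⟩ with htdef
  have htcoe : (t : E) = κ⁻¹ • ⁅e₀, f₀⁆ := rfl
  have htreps : t ∈ reps B H γ := by
    intro h
    rw [htcoe, map_smul, LinearMap.smul_apply, smul_eq_mul,
      bracket_pair hB.invariant he₀ hf₀ h]
    field_simp
    rw [hκdef]; ring
  set c : k := κ⁻¹ * B' e₀ f₀ with hcdef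
  have htB' : ∀ h : H, B' (t : E) (h : E) = c * γ h := by
    intro h
    rw [htcoe, map_smul, LinearMap.smul_apply, smul_eq_mul,
      bracket_pair hinv' he₀ hf₀ h, hcdef]
    ring
  -- γ(t) ≠ 0
  have htt0 : t = t₀ := reps_unique hB.H_nondeg htreps ht₀
  have hγt : γ t ≠ 0 := by
    have := htreps t
    rw [htt0] at this ⊢
    rw [← this]
    exact ht₀0
  -- proportionality on E_γ × E_{-γ}
  have hprop : ∀ x ∈ wtSpace H γ, ∀ y ∈ wtSpace H (-γ), B' x y = c * B x y := by
    intro x hx y hy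
    have hbH' : ⁅x, y⁆ ∈ H := by
      have h0 := bracket_mem_wt_zero hx hy
      rw [hB.self_centralizing] at h0
      exact h0
    set u : H := ⟨⁅x, y⁆, hbH'⟩ with hudef
    -- u = B x y • t, by nondegeneracy of B on H
    have huB : ∀ h : H, B (u : E) (h : E) = γ h * B x y :=
      fun h => bracket_pair hB.invariant hx hy h
    have hut : u = B x y • t := by
      have h0 : u - B x y • t = 0 := by
        apply hB.H_nondeg
        intro h
        have hc : ((u - B x y • t : H) : E) = (u : E) - B x y • (t : E) := rfl
        rw [hc, map_sub, LinearMap.sub_apply, map_smul, LinearMap.smul_apply, smul_eq_mul,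
          huB h, htreps h]
        ring
      exact sub_eq_zero.mp h0
    have huB' : ∀ h : H, B' (u : E) (h : E) = γ h * B' x y :=
      fun h => bracket_pair hinv' hx hy h
    have hucoe : (u : E) = B x y • (t : E) := by
      rw [hut]; rfl
    have hkey : γ t * B' x y = γ t * (c * B x y) := by
      have h1 := huB' t
      rw [hucoe, map_smul, LinearMap.smul_apply, smul_eq_mul, htB' t] at h1
      rw [← h1]; ring
    exact mul_left_cancel₀ hγt hkey
  -- c ≠ 0
  have hc0 : c ≠ 0 := by
    intro hc
    obtain ⟨y, hy, hy0⟩ := exists_pairing hB.toral hinv' hnondeg' he₀ he₀0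
    apply hy0
    rw [hprop e₀ he₀ y hy, hc, zero_mul]
  exact ⟨c, t, hc0, htreps, htB', hprop⟩

end ProofAux

/-- Corollary 3.3(b) of the paper: the restrictions to the common core
of the invariant forms of two EALA structures on the same Lie algebra `E` are
proportional: there is `0 ≠ a ∈ k` with `(x|y)' = a·(x|y)` for all `x, y ∈ E_c`. -/
theorem eala_forms_proportional_on_core
    {k E : Type*} [Field k] [CharZero k] [LieRing E] [LieAlgebra k E]
    (B : E →ₗ[k] E →ₗ[k] k) (H : LieSubalgebra k E) (h : IsEALA B H)
    (B' : E →ₗ[k] E →ₗ[k] k) (H' : LieSubalgebra k E) (h' : IsEALA B' H')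
    -- the cores of the two structures coincide (Corollary 3.2 of the paper)
    (hcores : core B H = core B' H') :
    ∃ a : k, a ≠ 0 ∧ ∀ x ∈ core B H, ∀ y ∈ core B H, B' x y = a * B x y := by
  classical
  -- per-root constants
  have key := fun γ (hγ : γ ∈ anisoRootSet B H) =>
    key_lemma h h'.invariant h'.nondeg hγ
  choose c t hc0 htreps htB' hprop using key
  obtain ⟨α₀, hα₀⟩ := aniso_nonempty h
  set a : k := c α₀ hα₀ with hadef
  -- the constants agree across anisotropic roots, by (EA3)
  have hconst : ∀ γ (hγ : γ ∈ anisoRootSet B H), c γ hγ = a := by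
    by_contra hcon
    push_neg at hcon
    obtain ⟨β, hβ, hβne⟩ := hcon
    set Ψ₁ : Set (Module.Dual k H) := {γ | ∃ hγ : γ ∈ anisoRootSet B H, c γ hγ = a} with hΨ₁
    set Ψ₂ : Set (Module.Dual k H) := {γ | ∃ hγ : γ ∈ anisoRootSet B H, c γ hγ ≠ a} with hΨ₂
    have hcover : anisoRootSet B H = Ψ₁ ∪ Ψ₂ := by
      ext γ
      constructor
      · intro hγ
        by_cases hc : c γ hγ = a
        · exact Or.inl ⟨hγ, hc⟩
        · exact Or.inr ⟨hγ, hc⟩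
      · rintro (⟨hγ, -⟩ | ⟨hγ, -⟩) <;> exact hγ
    obtain ⟨α, hα1, β', hβ'2, s, hs, r, hr, hsr⟩ :=
      h.ea3 Ψ₁ Ψ₂ hcover ⟨α₀, hα₀, rfl⟩ ⟨β, hβ, hβne⟩
    obtain ⟨hα, hcα⟩ := hα1
    obtain ⟨hβ', hcβ'⟩ := hβ'2
    -- the representatives are unique, hence s = t α, r = t β'
    have hseq : s = t α hα := reps_unique h.H_nondeg hs (htreps α hα)
    have hreq : r = t β' hβ' := reps_unique h.H_nondeg hr (htreps β' hβ')
    -- compute B'(s,r) in two ways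
    have h1 : B' (s : E) (r : E) = c α hα * α r := by rw [hseq]; exact htB' α hα r
    have h2 : B' (r : E) (s : E) = c β' hβ' * β' s := by rw [hreq]; exact htB' β' hβ' s
    have hαr : α r = B (s : E) (r : E) := (hs r).symm
    have hβ's : β' s = B (r : E) (s : E) := (hr s).symm
    have hBsym : B (r : E) (s : E) = B (s : E) (r : E) := h.symm _ _
    have hB'sym : B' (s : E) (r : E) = B' (r : E) (s : E) := h'.symm _ _
    have : c α hα * B (s : E) (r : E) = c β' hβ' * B (s : E) (r : E) := by
      rw [← hαr]
      rw [h1] at hB'sym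
      rw [h2, hβ's, hBsym] at hB'sym
      rw [hB'sym, hαr]
    exact hcβ' (by rw [← hcα]; exact (mul_right_cancel₀ hsr this).symm)
  refine ⟨a, hc0 α₀ hα₀, ?_⟩
  -- the set of x with B' x · = a · B x · is a Lie subalgebra containing the generators
  set K : LieSubalgebra k E :=
    { carrier := {x : E | ∀ w : E, B' x w = a * B x w}
      add_mem' := by
        intro x y hx hy w
        simp only [map_add, LinearMap.add_apply]
        rw [hx w, hy w]
        ring
      zero_mem' := by
        intro w
        simp
      smul_mem' := by
        intro r x hx w
        simp only [map_smul, LinearMap.smul_apply, smul_eq_mul]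
        rw [hx w]
        ring
      lie_mem' := by
        intro x y hx _ w
        rw [h'.invariant, hx ⁅y, w⁆, h.invariant] } with hKdef
  have hgen : (⋃ α ∈ anisoRootSet B H, (wtSpace H α : Set E)) ⊆ (K : Set E) := by
    intro x hx
    simp only [Set.mem_iUnion, SetLike.mem_coe] at hx
    obtain ⟨γ, hγ, hxγ⟩ := hx
    intro w
    have hw : w ∈ (⨆ α : Module.Dual k H, wtSpace H α) := by rw [h.toral]; exact trivial
    refine Submodule.iSup_induction (motive := fun w => B' x w = a * B x w) _ hw ?_ ?_ ?_
    · intro δ y hy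
      by_cases hδ : γ + δ = 0
      · have hδ' : δ = -γ := eq_neg_of_add_eq_zero_right hδ
        rw [hδ'] at hy
        rw [hprop γ hγ x hxγ y hy, hconst γ hγ]
      · rw [wt_ortho h'.invariant hδ hxγ hy, wt_ortho h.invariant hδ hxγ hy, mul_zero]
    · simp
    · intro y z hy hz
      rw [map_add, map_add, hy, hz]
      ring
  have hcoreK : core B H ≤ K := LieSubalgebra.lieSpan_le.mpr hgen
  intro x hx y _
  exact hcoreK hx y
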